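/- Let A and B be square matrices over ℤ (of sizes n and m) such that there exist integer matrices R (n×m) and S (m×n) with A = RS and B = SR. Then coker(I_n − A) ≅ coker(I_m − B) as abelian groups. -/
import Mathlib

open Matrix Submodule

/-- Auxiliary: vecMul by `M` descends to a map of cokernels when `P * M = M * Q`. -/
noncomputable def cokerMap {n m : ℕ} (P : Matrix (Fin n) (Fin n) ℤ)
    (Q : Matrix (Fin m) (Fin m) ℤ) (M : Matrix (Fin n) (Fin m) ℤ)
    (h : P * M = M * Q) :
    ((Fin n → ℤ) ⧸ LinearMap.range (Matrix.vecMulLinear P)) →ₗ[ℤ]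
    ((Fin m → ℤ) ⧸ LinearMap.range (Matrix.vecMulLinear Q)) :=
  Submodule.liftQ _ ((LinearMap.range (Matrix.vecMulLinear Q)).mkQ.comp
      (Matrix.vecMulLinear M)) (by
    rintro x ⟨y, rfl⟩
    simp only [LinearMap.mem_ker, LinearMap.comp_apply, Matrix.vecMulLinear_apply,
      Submodule.mkQ_apply, Submodule.Quotient.mk_eq_zero]
    refine ⟨y ᵥ* M, ?_⟩
    simp [Matrix.vecMulLinear_apply, Matrix.vecMul_vecMul, h])

theorem cokerMap_mk {n m : ℕ} (P : Matrix (Fin n) (Fin n) ℤ)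
    (Q : Matrix (Fin m) (Fin m) ℤ) (M : Matrix (Fin n) (Fin m) ℤ)
    (h : P * M = M * Q) (x : Fin n → ℤ) :
    cokerMap P Q M h (Submodule.Quotient.mk x) = Submodule.Quotient.mk (x ᵥ* M) := rfl

/-- if `A = RS` and `B = SR` for integer matrices `R : n×m`, `S : m×n`,
then the cokernels of `I − A` and `I − B` (acting on row vectors) are isomorphic
abelian groups (invariance of the Bowen-Franks group under elementary strong shift
equivalence). -/
theorem stmt12 {n m : ℕ} (A : Matrix (Fin n) (Fin n) ℤ) (B : Matrix (Fin m) (Fin m) ℤ)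
    (R : Matrix (Fin n) (Fin m) ℤ) (S : Matrix (Fin m) (Fin n) ℤ)
    (hA : A = R * S) (hB : B = S * R) :
    Nonempty
      (((Fin n → ℤ) ⧸ LinearMap.range (Matrix.vecMulLinear (1 - A))) ≃+
       ((Fin m → ℤ) ⧸ LinearMap.range (Matrix.vecMulLinear (1 - B)))) := by
  have hR : (1 - A) * R = R * (1 - B) := by
    subst hA hB
    simp [Matrix.sub_mul, Matrix.mul_sub, Matrix.mul_assoc]
  have hS : (1 - B) * S = S * (1 - A) := by
    subst hA hB
    simp [Matrix.sub_mul, Matrix.mul_sub, Matrix.mul_assoc]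
  refine ⟨(LinearEquiv.ofLinear (cokerMap _ _ R hR) (cokerMap _ _ S hS) ?_ ?_).toAddEquiv⟩
  · apply Submodule.linearMap_qext
    refine LinearMap.ext fun y => ?_
    simp only [LinearMap.comp_apply, Submodule.mkQ_apply, cokerMap_mk, LinearMap.id_apply]
    rw [Matrix.vecMul_vecMul, ← hB]
    rw [Submodule.Quotient.eq]
    exact ⟨-y, by simp [Matrix.vecMulLinear_apply, Matrix.sub_vecMul, Matrix.vecMul_sub, Matrix.neg_vecMul]; abel⟩
  · apply Submodule.linearMap_qext
    refine LinearMap.ext fun x => ?_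
    simp only [LinearMap.comp_apply, Submodule.mkQ_apply, cokerMap_mk, LinearMap.id_apply]
    rw [Matrix.vecMul_vecMul, ← hA]
    rw [Submodule.Quotient.eq]
    exact ⟨-x, by simp [Matrix.vecMulLinear_apply, Matrix.sub_vecMul, Matrix.vecMul_sub, Matrix.neg_vecMul]; abel⟩
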